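/- Let (E,q) be a finite-dimensional anisotropic quadratic space of odd dimension n over a field K of characteristic ≠ 2, with polar form not identically zero. Then every element of SO(E,q) is a product of at most n − 1 involutions belonging to SO(E,q). -/

import Mathlib

open QuadraticMap Module LinearMap

namespace SOInv

variable {K E : Type*} [Field K] [AddCommGroup E] [Module K E]

theorem refl_form_apply (q : QuadraticForm K E) {v : E} (hv : q v ≠ 0) :
    ((q v)⁻¹ • (QuadraticMap.polarBilin q v)) v = 2 := by
  simp only [LinearMap.smul_apply, polarBilin_apply_apply, polar_self, smul_eq_mul, two_nsmul]
  field_simp; ring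

/-- The reflection associated to a vector `v` with `q v ≠ 0`. -/
noncomputable def qrefl (q : QuadraticForm K E) {v : E} (hv : q v ≠ 0) : E ≃ₗ[K] E :=
  Module.reflection (refl_form_apply q hv)

theorem qrefl_apply (q : QuadraticForm K E) {v : E} (hv : q v ≠ 0) (y : E) :
    qrefl q hv y = y - ((q v)⁻¹ * polar q v y) • v := by
  rw [qrefl, Module.reflection_apply]
  simp [polarBilin_apply_apply, smul_eq_mul]

theorem qrefl_mul_self (q : QuadraticForm K E) {v : E} (hv : q v ≠ 0) :
    qrefl q hv * qrefl q hv = 1 := by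
  ext y
  exact Module.involutive_reflection (refl_form_apply q hv) y

theorem q_add (q : QuadraticForm K E) (a b : E) :
    q (a + b) = q a + q b + polar q a b := by
  simp only [QuadraticMap.polar]; ring

theorem qrefl_map_q (q : QuadraticForm K E) {v : E} (hv : q v ≠ 0) (y : E) :
    q (qrefl q hv y) = q y := by
  rw [qrefl_apply, sub_eq_add_neg, ← neg_smul, q_add, QuadraticMap.map_smul,
    polar_smul_right, polar_comm]
  field_simp
  ring_nf
  field_simp
  ring

theorem qrefl_det [FiniteDimensional K E] (hK : (2 : K) ≠ 0)
    (q : QuadraticForm K E) {v : E} (hv : q v ≠ 0) :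
    LinearMap.det (qrefl q hv : E →ₗ[K] E) = -1 := by
  set f : E →ₗ[K] K := (q v)⁻¹ • (QuadraticMap.polarBilin q v) with hf
  have hfv : f v = 2 := refl_form_apply q hv
  set m := finrank K (LinearMap.ker f) with hm
  let b : Basis (Fin m) K (LinearMap.ker f) := finBasis K (LinearMap.ker f)
  have hli : ∀ (c : K), ∀ x ∈ LinearMap.ker f, c • v + x = 0 → c = 0 := by
    intro c x hx h
    have := congrArg f h
    rw [map_add, _root_.map_smul, hfv, LinearMap.mem_ker.mp hx, add_zero, map_zero,
      smul_eq_mul] at this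
    rcases mul_eq_zero.mp this with h' | h'
    · exact h'
    · exact absurd h' hK
  have hsp : ∀ z : E, ∃ c : K, z + c • v ∈ LinearMap.ker f := by
    intro z
    refine ⟨-(f z) / 2, ?_⟩
    rw [LinearMap.mem_ker, map_add, _root_.map_smul, hfv, smul_eq_mul]
    field_simp
    ring
  let b' : Basis (Fin (m + 1)) K E := Basis.mkFinCons v b hli hsp
  have hb' : (b' : Fin (m + 1) → E) = Fin.cons v ((↑) ∘ b) := Basis.coe_mkFinCons v b hli hsp
  have hb0 : b' 0 = v := by rw [hb']; rfl
  have hbs : ∀ k : Fin m, f (b' k.succ) = 0 := by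
    intro k
    have : b' k.succ = (b k : E) := by rw [hb']; rfl
    rw [this]
    exact LinearMap.mem_ker.mp (b k).2
  have hrefl_app : ∀ y : E, qrefl q hv y = y - f y • v := fun y =>
    Module.reflection_apply y (refl_form_apply q hv)
  have hmat : LinearMap.toMatrix b' b' (qrefl q hv : E →ₗ[K] E)
      = Matrix.diagonal (Fin.cons (-1) fun _ => 1) := by
    ext i j
    rw [LinearMap.toMatrix_apply]
    induction j using Fin.cases with
    | zero =>
      have : (qrefl q hv : E →ₗ[K] E) (b' 0) = -(b' 0) := by
        simp only [LinearEquiv.coe_coe, hrefl_app, hb0, hfv, two_smul]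
        abel
      rw [this, _root_.map_neg, Basis.repr_self]
      rcases eq_or_ne i 0 with rfl | h
      · simp
      · simp [Finsupp.single_eq_of_ne' (Ne.symm h), Matrix.diagonal_apply_ne _ h]
    | succ k =>
      have : (qrefl q hv : E →ₗ[K] E) (b' k.succ) = b' k.succ := by
        simp only [LinearEquiv.coe_coe, hrefl_app, hbs k, zero_smul, sub_zero]
      rw [this, Basis.repr_self]
      rcases eq_or_ne i k.succ with rfl | h
      · simp
      · simp [Finsupp.single_eq_of_ne' (Ne.symm h), Matrix.diagonal_apply_ne _ h]
  rw [← LinearMap.det_toMatrix b', hmat, Matrix.det_diagonal, Fin.prod_univ_succ]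
  simp

theorem det_prod_list [FiniteDimensional K E] (l : List (E ≃ₗ[K] E)) :
    LinearMap.det ((l.prod : E ≃ₗ[K] E) : E →ₗ[K] E)
      = (l.map fun g : E ≃ₗ[K] E => LinearMap.det g.toLinearMap).prod := by
  induction l with
  | nil => simp
  | cons g t ih =>
    rw [List.prod_cons, List.map_cons, List.prod_cons, LinearEquiv.coe_toLinearMap_mul,
      map_mul, ih]

/-- The Cartan–Dieudonné induction: any isometry of an anisotropic quadratic space
is a product of at most `m` reflections, where `m` bounds the dimension of the
orthogonal complement of its fixed space. -/
theorem cartan_aux [FiniteDimensional K E] (hK : (2 : K) ≠ 0) (q : QuadraticForm K E)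
    (hq : q.Anisotropic) :
    ∀ m : ℕ, ∀ φ : E ≃ₗ[K] E, (∀ z, q (φ z) = q z) →
      finrank K (LinearMap.BilinForm.orthogonal (polarBilin q)
        (LinearMap.ker (LinearMap.id - (φ : E →ₗ[K] E)))) ≤ m →
      ∃ l : List (E ≃ₗ[K] E), l.length ≤ m ∧
        (∀ g ∈ l, g * g = 1 ∧ (∀ z, q (g z) = q z) ∧
          LinearMap.det (g : E →ₗ[K] E) = -1) ∧
        l.prod = φ := by
  have hq2 : ∀ x : E, polar q x x = 2 * q x := by
    intro x; rw [polar_self, two_nsmul, two_mul]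
  have hqz : ∀ x : E, polar q x x = 0 → x = 0 := by
    intro x hx
    rw [hq2] at hx
    rcases mul_eq_zero.mp hx with h | h
    · exact absurd h hK
    · exact hq x h
  have hBrefl : (polarBilin q).IsRefl := by
    intro x y h
    rw [polarBilin_apply_apply, polar_comm, ← polarBilin_apply_apply] at h
    exact h
  have hnd : LinearMap.BilinForm.Nondegenerate (polarBilin q) := by
    refine ⟨fun x hx => ?_, fun x hx => ?_⟩ <;>
    exact hqz x (by simpa [polarBilin_apply_apply] using hx x)
  have hdim : ∀ W : Submodule K E,
      finrank K (LinearMap.BilinForm.orthogonal (polarBilin q) W)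
        = finrank K E - finrank K W :=
    fun W => LinearMap.BilinForm.finrank_orthogonal hnd W
  intro m
  induction m with
  | zero =>
    intro φ hφq hle
    set W := LinearMap.ker (LinearMap.id - (φ : E →ₗ[K] E)) with hW
    have h1 : finrank K E - finrank K W = 0 := by
      rw [← hdim W]; omega
    have h2 : finrank K W = finrank K E :=
      le_antisymm (Submodule.finrank_le W) (by omega)
    have hWtop : W = ⊤ := Submodule.eq_top_of_finrank_eq h2
    have hφ1 : φ = 1 := by
      ext z
      have hz : z ∈ W := by rw [hWtop]; trivial
      have h := LinearMap.mem_ker.mp hz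
      simp only [LinearMap.sub_apply, LinearMap.id_apply, LinearEquiv.coe_coe] at h
      have h' : z = φ z := sub_eq_zero.mp h
      simp [LinearEquiv.coe_one, ← h']
    exact ⟨[], le_rfl, by simp, by simp [hφ1]⟩
  | succ m IH =>
    intro φ hφq hle
    set W := LinearMap.ker (LinearMap.id - (φ : E →ₗ[K] E)) with hWdef
    have hWmem : ∀ w, w ∈ W ↔ φ w = w := by
      intro w
      rw [hWdef, LinearMap.mem_ker]
      simp only [LinearMap.sub_apply, LinearMap.id_apply, LinearEquiv.coe_coe]
      rw [sub_eq_zero, eq_comm]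
    by_cases hm : finrank K (LinearMap.BilinForm.orthogonal (polarBilin q) W) ≤ m
    · obtain ⟨l, h1, h2, h3⟩ := IH φ hφq hm
      exact ⟨l, h1.trans (Nat.le_succ m), h2, h3⟩
    -- pick a nonzero vector in the orthogonal complement of the fixed space
    have hne : LinearMap.BilinForm.orthogonal (polarBilin q) W ≠ ⊥ := by
      intro h
      rw [h] at hm
      simp at hm
    obtain ⟨v, hvO, hv0⟩ := Submodule.exists_mem_ne_zero_of_ne_bot hne
    have hvW : ∀ w ∈ W, polar q w v = 0 := by
      intro w hw
      have := (LinearMap.BilinForm.mem_orthogonal_iff.mp hvO) w hw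
      rwa [polarBilin_apply_apply] at this
    have hφB : ∀ a b : E, polar q (φ a) (φ b) = polar q a b := by
      intro a b
      simp only [QuadraticMap.polar, ← map_add, hφq]
    have hvnW : v ∉ W := by
      intro h
      exact hv0 (hqz v (hvW v h))
    -- the reflection in `x = v - φ v` maps `φ v` to `v`
    set x := v - φ v with hxdef
    have hx0 : x ≠ 0 := by
      intro h
      exact hvnW ((hWmem v).mpr (sub_eq_zero.mp h).symm)
    have hqx : q x ≠ 0 := fun h => hx0 (hq x h)
    have hqxval : q x = 2 * q v - polar q v (φ v) := by
      rw [hxdef, sub_eq_add_neg, q_add, QuadraticMap.map_neg, polar_neg_right, hφq]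
      ring
    set ρ := qrefl q hqx with hρdef
    have hswap : ρ (φ v) = v := by
      have h1 : polar q x (φ v) = -(q x) := by
        rw [hxdef, polar_sub_left, hq2, hφq, hqxval]; ring
      rw [hρdef, qrefl_apply, h1, mul_neg, inv_mul_cancel₀ hqx, hxdef, neg_smul, one_smul]
      abel
    have hfix : ∀ w ∈ W, ρ w = w := by
      intro w hw
      have h1 : polar q x w = 0 := by
        have hphiv : polar q (φ v) w = 0 := by
          calc polar q (φ v) w = polar q (φ v) (φ w) := by rw [(hWmem w).mp hw]
          _ = polar q v w := hφB v w
          _ = 0 := by rw [polar_comm]; exact hvW w hw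
        rw [hxdef, polar_sub_left, hphiv, sub_zero, polar_comm]
        exact hvW w hw
      rw [hρdef, qrefl_apply, h1, mul_zero, zero_smul, sub_zero]
    -- the composition `ρ * φ` has strictly bigger fixed space
    set φ' := ρ * φ with hφ'def
    have hφ'app : ∀ z, φ' z = ρ (φ z) := fun z => rfl
    have hφ'q : ∀ z, q (φ' z) = q z := by
      intro z
      rw [hφ'app, hρdef, qrefl_map_q, hφq]
    set V := LinearMap.ker (LinearMap.id - (φ' : E →ₗ[K] E)) with hVdef
    have hVmem : ∀ w, w ∈ V ↔ φ' w = w := by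
      intro w
      rw [hVdef, LinearMap.mem_ker]
      simp only [LinearMap.sub_apply, LinearMap.id_apply, LinearEquiv.coe_coe]
      rw [sub_eq_zero, eq_comm]
    have hWV : W < V := by
      rw [SetLike.lt_iff_le_and_exists]
      constructor
      · intro w hw
        rw [hVmem, hφ'app, (hWmem w).mp hw]
        exact hfix w hw
      · exact ⟨v, (hVmem v).mpr (by rw [hφ'app, hswap]), hvnW⟩
    have hdimV : finrank K (LinearMap.BilinForm.orthogonal (polarBilin q) V) ≤ m := by
      have h1 : finrank K W < finrank K V := Submodule.finrank_lt_finrank_of_lt hWV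
      have h2 := hdim W
      have h3 := hdim V
      have h4 : finrank K V ≤ finrank K E := Submodule.finrank_le V
      omega
    obtain ⟨l, hl1, hl2, hl3⟩ := IH φ' hφ'q hdimV
    refine ⟨ρ :: l, by simpa using Nat.succ_le_succ hl1, ?_, ?_⟩
    · intro g hg'
      rcases List.mem_cons.mp hg' with rfl | hg
      · exact ⟨qrefl_mul_self q hqx, qrefl_map_q q hqx, qrefl_det hK q hqx⟩
      · exact hl2 g hg
    · rw [List.prod_cons, hl3, hφ'def, ← mul_assoc, qrefl_mul_self q hqx, one_mul]

end SOInv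

/-- Let `(E,q)` be a finite-dimensional anisotropic quadratic space of odd dimension `n`
over a field of characteristic ≠ 2, with polar form not identically zero. Then every
element of `SO(E,q)` is a product of at most `n - 1` involutions belonging to `SO(E,q)`. -/
theorem so_generated_by_involutions_odd_dim {K E : Type*} [Field K] [AddCommGroup E]
    [Module K E] [FiniteDimensional K E]
    (hK : (2 : K) ≠ 0) {n : ℕ} (hn : Module.finrank K E = n) (hodd : Odd n)
    (q : QuadraticForm K E) (hq : q.Anisotropic)
    (hb : ∃ u v, QuadraticMap.polar q u v ≠ 0)
    (φ : E ≃ₗ[K] E) (hφq : ∀ z, q (φ z) = q z)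
    (hφdet : LinearMap.det (φ : E →ₗ[K] E) = 1) :
    ∃ l : List (E ≃ₗ[K] E),
      l.length ≤ n - 1 ∧
      (∀ g ∈ l, g * g = 1 ∧ (∀ z, q (g z) = q z) ∧
        LinearMap.det (g : E →ₗ[K] E) = 1) ∧
      l.prod = φ := by
  classical
  -- get a factorization into at most `n` reflections
  obtain ⟨l, hl1, hl2, hl3⟩ := SOInv.cartan_aux hK q hq n φ hφq
    (hn ▸ Submodule.finrank_le _)
  -- the number of reflections is even, hence at most `n - 1`
  have hdet : ((-1 : K)) ^ l.length = 1 := by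
    have := SOInv.det_prod_list l
    rw [hl3, hφdet] at this
    rw [← List.length_map (as := l) (fun g : E ≃ₗ[K] E => LinearMap.det g.toLinearMap),
      ← List.prod_eq_pow_card _ (-1 : K) (by
        intro a ha
        obtain ⟨g, hg, rfl⟩ := List.mem_map.mp ha
        exact (hl2 g hg).2.2)]
    exact this.symm
  have heven : Even l.length := by
    by_contra hodd'
    rw [Nat.not_even_iff_odd] at hodd'
    rw [hodd'.neg_one_pow] at hdet
    exact hK (by linear_combination -hdet)
  have hlen : l.length ≤ n - 1 := by
    rcases Nat.lt_or_ge l.length n with h | h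
    · omega
    · have : l.length = n := le_antisymm hl1 h
      exfalso
      rw [this] at heven
      exact (Nat.not_even_iff_odd.mpr hodd) heven
  -- negate each reflection
  set ν : E ≃ₗ[K] E := LinearEquiv.neg K with hνdef
  have hνapp : ∀ z : E, ν z = -z := fun z => LinearEquiv.neg_apply z
  have hνcomm : ∀ g : E ≃ₗ[K] E, ν * g = g * ν := by
    intro g
    ext z
    show ν (g z) = g (ν z)
    rw [hνapp, hνapp, _root_.map_neg]
  have hν2 : ν * ν = 1 := by
    ext z
    show ν (ν z) = z
    rw [hνapp, hνapp, neg_neg]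
  have hνdet : LinearMap.det (ν : E →ₗ[K] E) = (-1 : K) ^ n := by
    have : (ν : E →ₗ[K] E) = (-1 : K) • LinearMap.id := by
      ext z; simp [hνapp]
    rw [this, LinearMap.det_smul, LinearMap.det_id, mul_one, hn]
  have hprodν : ∀ t : List (E ≃ₗ[K] E),
      (t.map fun g => ν * g).prod = ν ^ t.length * t.prod := by
    intro t
    induction t with
    | nil => simp
    | cons g s ih =>
      rw [List.map_cons, List.prod_cons, ih, List.length_cons, List.prod_cons, pow_succ']
      have hgν : Commute g ν := (hνcomm g).symm
      have hcomm : g * ν ^ s.length = ν ^ s.length * g := (hgν.pow_right s.length).eq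
      calc ν * g * (ν ^ s.length * s.prod)
          = ν * (g * ν ^ s.length) * s.prod := by rw [mul_assoc, mul_assoc, mul_assoc]
        _ = ν * (ν ^ s.length * g) * s.prod := by rw [hcomm]
        _ = ν * ν ^ s.length * (g * s.prod) := by rw [mul_assoc, mul_assoc, mul_assoc]
  have hνpow : ν ^ l.length = 1 := by
    obtain ⟨j, hj⟩ := heven
    have h2 : ν ^ 2 = 1 := by rw [pow_two]; exact hν2
    rw [hj, ← two_mul, pow_mul, h2, one_pow]
  refine ⟨l.map fun g => ν * g, by simpa using hlen, ?_, ?_⟩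
  · intro g hg
    obtain ⟨g₀, hg₀, rfl⟩ := List.mem_map.mp hg
    obtain ⟨hinv, hqpres, hdet₀⟩ := hl2 g₀ hg₀
    refine ⟨?_, ?_, ?_⟩
    · calc ν * g₀ * (ν * g₀) = ν * (g₀ * ν) * g₀ := by
            rw [mul_assoc, mul_assoc, mul_assoc]
        _ = ν * (ν * g₀) * g₀ := by rw [← hνcomm g₀]
        _ = ν * ν * (g₀ * g₀) := by rw [mul_assoc, mul_assoc, mul_assoc]
        _ = 1 := by rw [hν2, hinv, mul_one]
    · intro z
      show q (ν (g₀ z)) = q z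
      rw [hνapp, QuadraticMap.map_neg, hqpres]
    · rw [LinearEquiv.coe_toLinearMap_mul, map_mul, hνdet, hdet₀, hodd.neg_one_pow]
      ring
  · rw [hprodν, hνpow, one_mul, hl3]
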